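/- Let 1/4 ≤ a ≤ 1 and 0 < ρ < 1. Then ∫_{ℝ³} (1 - ρμ(v))^{-4} μ(v)^{2a} |v|² dv is comparable to (1-ρ)^{-3/2}, with constants independent of ρ. -/

import Mathlib

open MeasureTheory Real Metric

noncomputable def quantumMu (v : EuclideanSpace ℝ (Fin 3)) : ℝ := Real.exp (-‖v‖^2 / 2)

noncomputable def gfun (s : ℝ) (v : EuclideanSpace ℝ (Fin 3)) : ℝ :=
  ‖v‖^2 * ((s + ‖v‖^2/2) ^ (4:ℕ))⁻¹

lemma keyIneq {ε t : ℝ} (hε : 0 < ε) (hε1 : ε ≤ 1) (ht : 0 ≤ t) :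
    (ε + t) * Real.exp (-(t/8)) ≤ 13 * ((1 - Real.exp (-t)) + ε * Real.exp (-t)) := by
  rcases le_or_gt t 1 with h1 | h1
  · have hA : Real.exp (-(t/8)) = Real.exp (-t) * Real.exp (7*t/8) := by
      rw [← Real.exp_add]; ring_nf
    have h2 : Real.exp (7*t/8) ≤ 3 := by
      calc Real.exp (7*t/8) ≤ Real.exp 1 := Real.exp_le_exp.mpr (by linarith)
        _ ≤ 3 := by linarith [Real.exp_one_lt_d9]
    have h3 : t * Real.exp (-t) ≤ 1 - Real.exp (-t) := by
      have hx := Real.add_one_le_exp t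
      have hinv : Real.exp (-t) * Real.exp t = 1 := by
        rw [← Real.exp_add]; simp
      nlinarith [Real.exp_pos (-t)]
    have hAle : Real.exp (-t) ≤ 1 := by
      rw [show (1:ℝ) = Real.exp 0 by simp]
      exact Real.exp_le_exp.mpr (by linarith)
    rw [hA]
    nlinarith [Real.exp_pos (-t), Real.exp_pos (7*t/8),
      mul_nonneg (mul_nonneg (by linarith : (0:ℝ) ≤ ε + t) (Real.exp_pos (-t)).le)
        (by linarith : (0:ℝ) ≤ 3 - Real.exp (7*t/8)),
      mul_nonneg hε.le (Real.exp_pos (-t)).le]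
  · have h8 : (1 + t) * Real.exp (-(t/8)) ≤ 8 := by
      have h := Real.add_one_le_exp (t/8)
      have hinv : Real.exp (-(t/8)) * Real.exp (t/8) = 1 := by
        rw [← Real.exp_add]; simp
      nlinarith [Real.exp_pos (-(t/8)), Real.exp_pos (t/8)]
    have hrhs : (8:ℝ) ≤ 13 * (1 - Real.exp (-1)) := by
      rw [Real.exp_neg]
      have he : (2.7182818283 : ℝ) < Real.exp 1 := Real.exp_one_gt_d9
      have h0 : Real.exp 1 * (Real.exp 1)⁻¹ = 1 := mul_inv_cancel₀ (Real.exp_pos 1).ne'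
      nlinarith [Real.exp_pos 1, inv_pos.mpr (Real.exp_pos 1)]
    have hm : Real.exp (-t) ≤ Real.exp (-1) := Real.exp_le_exp.mpr (by linarith)
    have hlhs : (ε + t) * Real.exp (-(t/8)) ≤ 8 := by
      have : (ε + t) * Real.exp (-(t/8)) ≤ (1 + t) * Real.exp (-(t/8)) :=
        mul_le_mul_of_nonneg_right (by linarith) (Real.exp_pos _).le
      linarith
    nlinarith [mul_nonneg hε.le (Real.exp_pos (-t)).le]

lemma gfun_nonneg (s : ℝ) (v : EuclideanSpace ℝ (Fin 3)) : 0 ≤ gfun s v := by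
  unfold gfun
  have h4 : (0:ℝ) ≤ (s + ‖v‖^2/2) ^ (4:ℕ) := Even.pow_nonneg ⟨2, by norm_num⟩ _
  positivity

lemma gfun_cont {s : ℝ} (hs : 0 < s) : Continuous (gfun s) := by
  unfold gfun
  apply Continuous.mul (by fun_prop)
  apply Continuous.inv₀ (by fun_prop)
  intro v
  positivity

lemma gfun_int_one : Integrable (gfun 1) (volume : Measure (EuclideanSpace ℝ (Fin 3))) := by
  have hint : Integrable (fun v : EuclideanSpace ℝ (Fin 3) => (256:ℝ) * (1 + ‖v‖) ^ (-(6:ℝ))) :=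
    (integrable_one_add_norm (by simp [finrank_euclideanSpace_fin]; norm_num)).const_mul 256
  refine hint.mono' (gfun_cont one_pos).aestronglyMeasurable ?_
  filter_upwards with v
  rw [Real.norm_eq_abs, abs_of_nonneg (gfun_nonneg 1 v)]
  have hrp : (1 + ‖v‖) ^ (-(6:ℝ)) = (((1 + ‖v‖) ^ (6:ℕ)))⁻¹ := by
    rw [← Real.rpow_natCast (1 + ‖v‖) 6, ← Real.rpow_neg (by positivity)]
    norm_num
  rw [hrp]
  unfold gfun
  set r := ‖v‖ with hr
  have hr0 : 0 ≤ r := norm_nonneg v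
  have h1 : (1+r)^2 ≤ 4*(1+r^2/2) := by nlinarith
  have h3 : ((1+r)^2)^4 ≤ (4*(1+r^2/2))^4 := pow_le_pow_left₀ (by positivity) h1 4
  have h4 : r^2 ≤ (1+r)^2 := by nlinarith
  have h5 : r^2*(1+r)^6 ≤ (1+r)^2*(1+r)^6 := mul_le_mul_of_nonneg_right h4 (by positivity)
  have h6 : r^2 * (1+r)^(6:ℕ) ≤ 256 * (1 + r^2/2)^(4:ℕ) := by nlinarith
  have hX : (0:ℝ) < (1 + r^2/2)^(4:ℕ) := by positivity
  have hY : (0:ℝ) < (1 + r)^(6:ℕ) := by positivity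
  rw [show (256:ℝ) * (((1+r)^(6:ℕ)))⁻¹ = 256 / (1+r)^(6:ℕ) from (div_eq_mul_inv _ _).symm,
      show r^2 * ((1 + r^2/2)^(4:ℕ))⁻¹ = r^2 / (1 + r^2/2)^(4:ℕ) from (div_eq_mul_inv _ _).symm,
      div_le_div_iff₀ hX hY]
  exact h6

lemma gfun_le {s : ℝ} (hs : 0 < s) (hs1 : s ≤ 1) (v : EuclideanSpace ℝ (Fin 3)) :
    gfun s v ≤ (s^(4:ℕ))⁻¹ * gfun 1 v := by
  unfold gfun
  set t := ‖v‖^2/2 with htdef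
  have ht : 0 ≤ t := by positivity
  have h1 : s * (1 + t) ≤ s + t := by nlinarith
  have h2 : (s * (1+t))^(4:ℕ) ≤ (s+t)^(4:ℕ) := pow_le_pow_left₀ (by positivity) h1 4
  have h3 : ((s+t)^(4:ℕ))⁻¹ ≤ ((s * (1+t))^(4:ℕ))⁻¹ :=
    inv_anti₀ (by positivity) h2
  have h4 : ((s * (1+t))^(4:ℕ))⁻¹ = (s^(4:ℕ))⁻¹ * ((1+t)^(4:ℕ))⁻¹ := by
    rw [mul_pow, mul_inv]
  calc ‖v‖^2 * ((s+t)^(4:ℕ))⁻¹ ≤ ‖v‖^2 * ((s * (1+t))^(4:ℕ))⁻¹ :=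
        mul_le_mul_of_nonneg_left h3 (by positivity)
    _ = (s^(4:ℕ))⁻¹ * (‖v‖^2 * ((1+t)^(4:ℕ))⁻¹) := by rw [h4]; ring

lemma gfun_int {s : ℝ} (hs : 0 < s) (hs1 : s ≤ 1) :
    Integrable (gfun s) (volume : Measure (EuclideanSpace ℝ (Fin 3))) := by
  refine (gfun_int_one.const_mul ((s^(4:ℕ))⁻¹)).mono' (gfun_cont hs).aestronglyMeasurable ?_
  filter_upwards with v
  rw [Real.norm_eq_abs, abs_of_nonneg (gfun_nonneg s v)]
  exact gfun_le hs hs1 v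

lemma gfun_integral {s : ℝ} (hs : 0 < s) :
    (∫ v : EuclideanSpace ℝ (Fin 3), gfun s v) =
      s ^ (-(3:ℝ)/2) * ∫ v : EuclideanSpace ℝ (Fin 3), gfun 1 v := by
  have h := MeasureTheory.Measure.integral_comp_smul
      (volume : Measure (EuclideanSpace ℝ (Fin 3))) (gfun s) (Real.sqrt s)
  have hfr : Module.finrank ℝ (EuclideanSpace ℝ (Fin 3)) = 3 := finrank_euclideanSpace_fin
  rw [hfr] at h
  have hsq : 0 < Real.sqrt s := Real.sqrt_pos.mpr hs
  have hident : ∀ x : EuclideanSpace ℝ (Fin 3),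
      gfun s (Real.sqrt s • x) = ((s^(3:ℕ))⁻¹) * gfun 1 x := by
    intro x
    have hnorm : ‖Real.sqrt s • x‖^2 = s * ‖x‖^2 := by
      rw [norm_smul, Real.norm_eq_abs, abs_of_nonneg (Real.sqrt_nonneg s), mul_pow,
        Real.sq_sqrt hs.le]
    simp only [gfun, hnorm]
    rw [show s + s * ‖x‖^2/2 = s * (1 + ‖x‖^2/2) by ring, mul_pow, mul_inv]
    have hp : ((1:ℝ) + ‖x‖^2/2) ^ (4:ℕ) ≠ 0 := by positivity
    field_simp
  simp only [hident] at h
  rw [MeasureTheory.integral_const_mul] at h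
  have habs : |((Real.sqrt s ^ 3)⁻¹)| = (Real.sqrt s ^ 3)⁻¹ := abs_of_nonneg (by positivity)
  rw [habs, smul_eq_mul] at h
  -- h : (s^3)⁻¹ * ∫ gfun 1 = (√s^3)⁻¹ * ∫ gfun s
  have hkey : (∫ v : EuclideanSpace ℝ (Fin 3), gfun s v) =
      Real.sqrt s ^ 3 * ((s^(3:ℕ))⁻¹ * ∫ v : EuclideanSpace ℝ (Fin 3), gfun 1 v) := by
    rw [h]
    field_simp
  rw [hkey]
  have hcoef : Real.sqrt s ^ 3 * (s^(3:ℕ))⁻¹ = s ^ (-(3:ℝ)/2) := by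
    rw [Real.sqrt_eq_rpow, ← Real.rpow_natCast (s ^ ((1:ℝ)/2)) 3, ← Real.rpow_natCast s 3,
      ← Real.rpow_mul hs.le, ← Real.rpow_neg hs.le, ← Real.rpow_add hs]
    norm_num
  rw [← mul_assoc, hcoef]

lemma quantumMu_pos (v : EuclideanSpace ℝ (Fin 3)) : 0 < quantumMu v := Real.exp_pos _

lemma quantumMu_le_one (v : EuclideanSpace ℝ (Fin 3)) : quantumMu v ≤ 1 := by
  unfold quantumMu
  rw [show (1:ℝ) = Real.exp 0 by simp]
  apply Real.exp_le_exp.mpr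
  have : (0:ℝ) ≤ ‖v‖^2 := sq_nonneg _
  linarith

lemma quantumMu_eq (v : EuclideanSpace ℝ (Fin 3)) :
    quantumMu v = Real.exp (-(‖v‖^2/2)) := by rw [quantumMu, neg_div]

lemma denom_pos {ρ : ℝ} (hρ0 : 0 < ρ) (hρ1 : ρ < 1) (v : EuclideanSpace ℝ (Fin 3)) :
    0 < 1 - ρ * quantumMu v := by
  nlinarith [quantumMu_pos v, quantumMu_le_one v]

lemma f_le_g {a ρ : ℝ} (ha1 : 1/4 ≤ a) (hρ0 : 0 < ρ) (hρ1 : ρ < 1)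
    (v : EuclideanSpace ℝ (Fin 3)) :
    (1 - ρ * quantumMu v)⁻¹ ^ (4:ℕ) * (quantumMu v) ^ (2*a) * ‖v‖^2 ≤
      28561 * gfun (1-ρ) v := by
  have hD := denom_pos hρ0 hρ1 v
  unfold gfun
  set t := ‖v‖^2/2 with htdef
  have ht : 0 ≤ t := by positivity
  have hμ : quantumMu v = Real.exp (-t) := quantumMu_eq v
  have hε : 0 < 1 - ρ := by linarith
  have hε1 : 1 - ρ ≤ 1 := by linarith
  have key := keyIneq hε hε1 ht
  have key2 : ((1-ρ) + t) * Real.exp (-(t/8)) ≤ 13 * (1 - ρ * quantumMu v) := by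
    rw [hμ]
    have : (1 - Real.exp (-t)) + (1-ρ) * Real.exp (-t) = 1 - ρ * Real.exp (-t) := by ring
    linarith [key, this.symm.le]
  have key4 : ((1-ρ) + t)^(4:ℕ) * Real.exp (-t/2) ≤ 28561 * (1 - ρ*quantumMu v)^(4:ℕ) := by
    have h := pow_le_pow_left₀ (mul_nonneg (by positivity) (Real.exp_pos _).le) key2 4
    calc ((1-ρ)+t)^(4:ℕ) * Real.exp (-t/2)
        = (((1-ρ)+t) * Real.exp (-(t/8)))^(4:ℕ) := by
          have hexp : Real.exp (-(t/8)) ^ (4:ℕ) = Real.exp (-t/2) := by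
            rw [← Real.exp_nat_mul]; congr 1; push_cast; ring
          rw [mul_pow, hexp]
      _ ≤ (13 * (1 - ρ*quantumMu v))^(4:ℕ) := h
      _ = 28561 * (1 - ρ*quantumMu v)^(4:ℕ) := by ring
  have hμa : quantumMu v ^ (2*a) ≤ Real.exp (-t/2) := by
    rw [hμ, ← Real.exp_mul]
    exact Real.exp_le_exp.mpr (by nlinarith)
  have hμa0 : 0 ≤ quantumMu v ^ (2*a) := Real.rpow_nonneg (quantumMu_pos v).le _
  have hmain : quantumMu v ^ (2*a) * ((1-ρ)+t)^(4:ℕ) ≤ 28561 * (1 - ρ*quantumMu v)^(4:ℕ) := by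
    calc quantumMu v ^ (2*a) * ((1-ρ)+t)^(4:ℕ)
        ≤ Real.exp (-t/2) * ((1-ρ)+t)^(4:ℕ) := mul_le_mul_of_nonneg_right hμa (by positivity)
      _ ≤ 28561 * (1 - ρ*quantumMu v)^(4:ℕ) := by linarith [key4]
  have hX : (0:ℝ) < (1 - ρ*quantumMu v)^(4:ℕ) := by positivity
  have hY : (0:ℝ) < ((1-ρ)+t)^(4:ℕ) := by positivity
  have h2 : ((1 - ρ*quantumMu v)^(4:ℕ))⁻¹ * quantumMu v ^ (2*a) ≤ 28561 * (((1-ρ)+t)^(4:ℕ))⁻¹ := by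
    rw [show ((1 - ρ*quantumMu v)^(4:ℕ))⁻¹ * quantumMu v ^ (2*a)
        = quantumMu v ^ (2*a) / (1 - ρ*quantumMu v)^(4:ℕ) by rw [div_eq_mul_inv]; ring,
      show (28561:ℝ) * ((((1-ρ)+t)^(4:ℕ)))⁻¹ = 28561 / ((1-ρ)+t)^(4:ℕ) from
        (div_eq_mul_inv _ _).symm,
      div_le_div_iff₀ hX hY]
    linarith [hmain]
  calc (1 - ρ * quantumMu v)⁻¹ ^ (4:ℕ) * quantumMu v ^ (2*a) * ‖v‖^2
      = (((1 - ρ*quantumMu v)^(4:ℕ))⁻¹ * quantumMu v ^ (2*a)) * ‖v‖^2 := by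
        rw [inv_pow]
    _ ≤ (28561 * (((1-ρ)+t)^(4:ℕ))⁻¹) * ‖v‖^2 :=
        mul_le_mul_of_nonneg_right h2 (by positivity)
    _ = 28561 * (‖v‖^2 * (((1-ρ) + t)^(4:ℕ))⁻¹) := by ring

lemma F_nonneg {a ρ : ℝ} (v : EuclideanSpace ℝ (Fin 3)) :
    0 ≤ (1 - ρ * quantumMu v)⁻¹ ^ (4:ℕ) * (quantumMu v) ^ (2*a) * ‖v‖^2 := by
  apply mul_nonneg (mul_nonneg ?_ (Real.rpow_nonneg (quantumMu_pos v).le _)) (by positivity)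
  exact Even.pow_nonneg ⟨2, by norm_num⟩ _

lemma F_cont {a ρ : ℝ} (hρ0 : 0 < ρ) (hρ1 : ρ < 1) :
    Continuous (fun v : EuclideanSpace ℝ (Fin 3) =>
      (1 - ρ * quantumMu v)⁻¹ ^ (4:ℕ) * (quantumMu v) ^ (2*a) * ‖v‖^2) := by
  have hc : Continuous quantumMu := by unfold quantumMu; fun_prop
  have h1 : Continuous (fun v : EuclideanSpace ℝ (Fin 3) => (1 - ρ * quantumMu v)⁻¹) :=
    Continuous.inv₀ (by fun_prop) (fun v => (denom_pos hρ0 hρ1 v).ne')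
  have h2 : Continuous (fun v : EuclideanSpace ℝ (Fin 3) => (quantumMu v) ^ (2*a)) :=
    hc.rpow_const (fun v => Or.inl (quantumMu_pos v).ne')
  fun_prop

lemma f_ge {a ρ : ℝ} (ha1 : 1/4 ≤ a) (ha2 : a ≤ 1) (hρ0 : 0 < ρ) (hρ1 : ρ < 1)
    {v : EuclideanSpace ℝ (Fin 3)}
    (hv1 : Real.sqrt (1-ρ)/2 ≤ ‖v‖) (hv2 : ‖v‖ < Real.sqrt (1-ρ)) :
    (4/81) * (Real.exp 1)⁻¹ * (((1-ρ)^(3:ℕ))⁻¹) ≤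
      (1 - ρ * quantumMu v)⁻¹ ^ (4:ℕ) * (quantumMu v) ^ (2*a) * ‖v‖^2 := by
  set ε := 1 - ρ with hεdef
  have hε : 0 < ε := by simp only [hεdef]; linarith
  have hε1 : ε ≤ 1 := by simp only [hεdef]; linarith
  set t := ‖v‖^2/2 with htdef
  have ht : 0 ≤ t := by positivity
  have hμ : quantumMu v = Real.exp (-t) := quantumMu_eq v
  have hvsq : ‖v‖^2 < ε := by
    have := pow_lt_pow_left₀ hv2 (norm_nonneg v) (by norm_num : (2:ℕ) ≠ 0)
    rwa [Real.sq_sqrt hε.le] at this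
  have hvsq' : ε/4 ≤ ‖v‖^2 := by
    have h := pow_le_pow_left₀ (by positivity) hv1 2
    have h2 : (Real.sqrt ε / 2)^2 = ε/4 := by
      rw [div_pow, Real.sq_sqrt hε.le]; norm_num
    rw [h2] at h; exact h
  have htε : t ≤ ε/2 := by simp only [htdef]; linarith
  have hμ1 : Real.exp (-t) ≤ 1 := by
    rw [show (1:ℝ) = Real.exp 0 by simp]; exact Real.exp_le_exp.mpr (by linarith)
  have hDpos : 0 < 1 - ρ * quantumMu v := by
    rw [hμ]; nlinarith [Real.exp_pos (-t)]
  have hDle : 1 - ρ * quantumMu v ≤ (3/2) * ε := by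
    rw [hμ]
    have h1 : 1 - Real.exp (-t) ≤ t := by linarith [Real.add_one_le_exp (-t)]
    have : 1 - ρ * Real.exp (-t) = (1 - Real.exp (-t)) + ε * Real.exp (-t) := by
      simp only [hεdef]; ring
    rw [this]
    have h2 : ε * Real.exp (-t) ≤ ε := by nlinarith [Real.exp_pos (-t)]
    linarith
  have hinv : ((3/2) * ε)⁻¹ ≤ (1 - ρ * quantumMu v)⁻¹ := inv_anti₀ hDpos hDle
  have hpow : (((3/2) * ε)⁻¹)^(4:ℕ) ≤ ((1 - ρ * quantumMu v)⁻¹)^(4:ℕ) :=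
    pow_le_pow_left₀ (by positivity) hinv 4
  have hμa : Real.exp (-1) ≤ quantumMu v ^ (2*a) := by
    rw [hμ, ← Real.exp_mul]
    apply Real.exp_le_exp.mpr
    nlinarith
  have h1 : (((3/2) * ε)⁻¹)^(4:ℕ) * Real.exp (-1) ≤
      ((1 - ρ * quantumMu v)⁻¹)^(4:ℕ) * quantumMu v ^ (2*a) :=
    mul_le_mul hpow hμa (Real.exp_pos _).le (by positivity)
  have h2 : (((3/2) * ε)⁻¹)^(4:ℕ) * Real.exp (-1) * (ε/4) ≤
      ((1 - ρ * quantumMu v)⁻¹)^(4:ℕ) * quantumMu v ^ (2*a) * ‖v‖^2 := by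
    apply mul_le_mul h1 (by linarith) (by positivity)
    exact mul_nonneg (pow_nonneg (inv_nonneg.mpr hDpos.le) 4)
      (Real.rpow_nonneg (quantumMu_pos v).le _)
  have heq : (((3/2) * ε)⁻¹)^(4:ℕ) * Real.exp (-1) * (ε/4)
      = (4/81) * (Real.exp 1)⁻¹ * ((ε^(3:ℕ))⁻¹) := by
    rw [Real.exp_neg]
    field_simp
    ring
  linarith [h2, heq.symm.le]

theorem stmt_3 (a : ℝ) (ha1 : 1/4 ≤ a) (ha2 : a ≤ 1) :
    ∃ c C : ℝ, 0 < c ∧ 0 < C ∧ ∀ ρ : ℝ, 0 < ρ → ρ < 1 →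
      c * (1 - ρ) ^ (-(3:ℝ)/2) ≤
        ∫ v : EuclideanSpace ℝ (Fin 3),
          (1 - ρ * quantumMu v)⁻¹ ^ (4:ℕ) * (quantumMu v) ^ (2*a) * ‖v‖^2 ∧
      (∫ v : EuclideanSpace ℝ (Fin 3),
          (1 - ρ * quantumMu v)⁻¹ ^ (4:ℕ) * (quantumMu v) ^ (2*a) * ‖v‖^2) ≤
        C * (1 - ρ) ^ (-(3:ℝ)/2) := by
  have hball : (0:ℝ) < (volume (ball (0:EuclideanSpace ℝ (Fin 3)) 1)).toReal :=
    ENNReal.toReal_pos (measure_ball_pos volume 0 one_pos).ne' measure_ball_lt_top.ne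
  have hI1 : 0 ≤ ∫ v : EuclideanSpace ℝ (Fin 3), gfun 1 v :=
    integral_nonneg (fun v => gfun_nonneg 1 v)
  refine ⟨(4/81) * (Real.exp 1)⁻¹ *
      ((7/8) * (volume (ball (0:EuclideanSpace ℝ (Fin 3)) 1)).toReal),
    28561 * (∫ v : EuclideanSpace ℝ (Fin 3), gfun 1 v) + 1,
    by positivity, by positivity, ?_⟩
  intro ρ hρ0 hρ1
  have hε : 0 < 1 - ρ := by linarith
  have hε1 : 1 - ρ ≤ 1 := by linarith
  have hFint : Integrable (fun v : EuclideanSpace ℝ (Fin 3) =>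
      (1 - ρ * quantumMu v)⁻¹ ^ (4:ℕ) * (quantumMu v) ^ (2*a) * ‖v‖^2) := by
    refine ((gfun_int hε hε1).const_mul 28561).mono'
      (F_cont hρ0 hρ1).aestronglyMeasurable ?_
    filter_upwards with v
    rw [Real.norm_eq_abs, abs_of_nonneg (F_nonneg v)]
    exact f_le_g ha1 hρ0 hρ1 v
  constructor
  · -- lower bound
    set S : Set (EuclideanSpace ℝ (Fin 3)) :=
      ball 0 (Real.sqrt (1-ρ)) \ ball 0 (Real.sqrt (1-ρ) / 2) with hSdef
    have hSm : MeasurableSet S := measurableSet_ball.diff measurableSet_ball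
    have hsub : ball (0:EuclideanSpace ℝ (Fin 3)) (Real.sqrt (1-ρ) / 2) ⊆
        ball 0 (Real.sqrt (1-ρ)) := by
      apply ball_subset_ball
      have := Real.sqrt_nonneg (1-ρ)
      linarith
    have hvol : volume S = volume (ball (0:EuclideanSpace ℝ (Fin 3)) (Real.sqrt (1-ρ))) -
        volume (ball (0:EuclideanSpace ℝ (Fin 3)) (Real.sqrt (1-ρ)/2)) :=
      measure_diff hsub measurableSet_ball.nullMeasurableSet measure_ball_lt_top.ne
    have hb1 : (volume (ball (0:EuclideanSpace ℝ (Fin 3)) (Real.sqrt (1-ρ)))).toReal =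
        (Real.sqrt (1-ρ))^3 * (volume (ball (0:EuclideanSpace ℝ (Fin 3)) 1)).toReal := by
      rw [Measure.addHaar_ball volume 0 (Real.sqrt_nonneg (1-ρ)), finrank_euclideanSpace_fin,
        ENNReal.toReal_mul, ENNReal.toReal_ofReal (by positivity)]
    have hb2 : (volume (ball (0:EuclideanSpace ℝ (Fin 3)) (Real.sqrt (1-ρ)/2))).toReal =
        (Real.sqrt (1-ρ)/2)^3 * (volume (ball (0:EuclideanSpace ℝ (Fin 3)) 1)).toReal := by
      rw [Measure.addHaar_ball volume 0 (by positivity), finrank_euclideanSpace_fin,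
        ENNReal.toReal_mul, ENNReal.toReal_ofReal (by positivity)]
    have htr : (volume S).toReal =
        (7/8) * (Real.sqrt (1-ρ))^3 *
          (volume (ball (0:EuclideanSpace ℝ (Fin 3)) 1)).toReal := by
      rw [hvol, ENNReal.toReal_sub_of_le (measure_mono hsub) measure_ball_lt_top.ne, hb1, hb2]
      ring
    have hSfin : volume S ≠ ⊤ := by
      refine ne_top_of_le_ne_top measure_ball_lt_top.ne (measure_mono Set.diff_subset)
    have hmem : ∀ v ∈ S, (4/81) * (Real.exp 1)⁻¹ * (((1-ρ)^(3:ℕ))⁻¹) ≤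
        (1 - ρ * quantumMu v)⁻¹ ^ (4:ℕ) * (quantumMu v) ^ (2*a) * ‖v‖^2 := by
      intro v hv
      refine f_ge ha1 ha2 hρ0 hρ1 ?_ (mem_ball_zero_iff.mp hv.1)
      by_contra h
      exact hv.2 (mem_ball_zero_iff.mpr (by linarith [not_le.mp h]))
    have hlow := setIntegral_ge_of_const_le hSm hSfin hmem hFint.integrableOn
    have hup := setIntegral_le_integral (s := S) hFint
      (Filter.Eventually.of_forall (fun v => F_nonneg v))
    have hεr : (1-ρ) ^ (-(3:ℝ)/2) = (Real.sqrt (1-ρ))^3 * (((1-ρ)^(3:ℕ))⁻¹) := by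
      rw [Real.sqrt_eq_rpow, ← Real.rpow_natCast ((1-ρ) ^ ((1:ℝ)/2)) 3,
        ← Real.rpow_natCast (1-ρ) 3, ← Real.rpow_mul hε.le, ← Real.rpow_neg hε.le,
        ← Real.rpow_add hε]
      norm_num
    have hlhs : (4/81) * (Real.exp 1)⁻¹ *
        ((7/8) * (volume (ball (0:EuclideanSpace ℝ (Fin 3)) 1)).toReal) *
          (1-ρ) ^ (-(3:ℝ)/2)
        = (4/81) * (Real.exp 1)⁻¹ * (((1-ρ)^(3:ℕ))⁻¹) * (volume S).toReal := by
      rw [hεr, htr]; ring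
    rw [hlhs]
    exact le_trans (le_trans (le_of_eq (by simp only [smul_eq_mul, Measure.real]; ring)) hlow) hup
  · -- upper bound
    calc (∫ v : EuclideanSpace ℝ (Fin 3),
          (1 - ρ * quantumMu v)⁻¹ ^ (4:ℕ) * (quantumMu v) ^ (2*a) * ‖v‖^2)
        ≤ ∫ v : EuclideanSpace ℝ (Fin 3), 28561 * gfun (1-ρ) v :=
          integral_mono hFint ((gfun_int hε hε1).const_mul 28561)
            (fun v => f_le_g ha1 hρ0 hρ1 v)
      _ = 28561 * ∫ v : EuclideanSpace ℝ (Fin 3), gfun (1-ρ) v :=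
          MeasureTheory.integral_const_mul _ _
      _ = 28561 * ((1-ρ) ^ (-(3:ℝ)/2) * ∫ v : EuclideanSpace ℝ (Fin 3), gfun 1 v) := by
          rw [gfun_integral hε]
      _ ≤ (28561 * (∫ v : EuclideanSpace ℝ (Fin 3), gfun 1 v) + 1) * (1-ρ) ^ (-(3:ℝ)/2) := by
          have hrp : 0 < (1-ρ) ^ (-(3:ℝ)/2) := Real.rpow_pos_of_pos hε _
          nlinarith [hI1, hrp]
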